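/- For every natural number n ≥ 1, the number of n-dimensional subspaces W of the 2n-dimensional vector space (ZMod 2)^{2n} on which the standard symplectic bilinear form ω((a,b),(c,d)) = a·d + b·c (where a,b,c,d ∈ (ZMod 2)^n and · is the dot product) vanishes identically equals Π_{k=1}^{n} (2^k + 1). -/

import Mathlib

open LinearMap Module Submodule Set

namespace Stab

variable (n : ℕ)

abbrev V := (Fin n → ZMod 2) × (Fin n → ZMod 2)

noncomputable def B : LinearMap.BilinForm (ZMod 2) (V n) :=
  LinearMap.mk₂ (ZMod 2)
    (fun u v => (∑ i, u.1 i * v.2 i) + (∑ i, u.2 i * v.1 i))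
    (by intro x y z; simp [add_mul, mul_add, Finset.sum_add_distrib]; ring)
    (by intro c x y; simp [Finset.mul_sum, mul_assoc, mul_add])
    (by intro x y z; simp [add_mul, mul_add, Finset.sum_add_distrib]; ring)
    (by intro c x y; simp [Finset.mul_sum, mul_assoc, mul_left_comm, mul_add])

@[simp] lemma B_apply (u v : V n) :
    B n u v = (∑ i, u.1 i * v.2 i) + (∑ i, u.2 i * v.1 i) := rfl

lemma B_symm : (B n).IsSymm := by
  constructor
  intro u v
  simp [B_apply, mul_comm, add_comm]

lemma B_refl : (B n).IsRefl := (B_symm n).isRefl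

lemma B_self (v : V n) : B n v v = 0 := by
  have h2 : ((2 : ZMod 2)) = 0 := by decide
  simp only [B_apply]
  rw [Finset.sum_congr rfl (fun i _ => mul_comm (v.2 i) (v.1 i)), ← two_mul, h2, zero_mul]

lemma B_nondeg : (B n).Nondegenerate := by
  refine (fun hL => ⟨hL, fun v hv => hL v fun u => by rw [(B_symm n).eq]; exact hv u⟩) ?_
  intro u hu
  have h1 : ∀ i, u.1 i = 0 := by
    intro i
    have := hu (0, Pi.single i 1)
    simpa [Pi.single_apply, Finset.sum_ite_eq'] using this
  have h2 : ∀ i, u.2 i = 0 := by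
    intro i
    have := hu (Pi.single i 1, 0)
    simpa [Pi.single_apply, Finset.sum_ite_eq'] using this
  exact Prod.ext (funext h1) (funext h2)

lemma finrank_V : finrank (ZMod 2) (V n) = 2 * n := by
  simp [V, two_mul]

variable {n}

lemma mem_orthogonal_span {ι : Type*} {t : ι → V n} {v : V n}
    (h : ∀ i, B n (t i) v = 0) :
    v ∈ (B n).orthogonal (span (ZMod 2) (Set.range t)) := by
  intro u hu
  have hle : span (ZMod 2) (Set.range t) ≤ ker ((B n).flip v) := by
    rw [span_le]; rintro _ ⟨i, rfl⟩; simpa [LinearMap.mem_ker] using h i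
  exact hle hu

lemma span_isotropic {ι : Type*} {t : ι → V n} (h : ∀ i j, B n (t i) (t j) = 0) :
    ∀ u ∈ span (ZMod 2) (Set.range t), ∀ v ∈ span (ZMod 2) (Set.range t), B n u v = 0 := by
  have step : ∀ v ∈ span (ZMod 2) (Set.range t), ∀ i, B n (t i) v = 0 := by
    intro v hv i
    have hle : span (ZMod 2) (Set.range t) ≤ ker (B n (t i)) := by
      rw [span_le]; rintro _ ⟨j, rfl⟩; simpa [LinearMap.mem_ker] using h i j
    exact hle hv
  intro u hu v hv
  exact mem_orthogonal_span (fun i => step v hv i) u hu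

lemma span_le_orthogonal {ι : Type*} {t : ι → V n} (h : ∀ i j, B n (t i) (t j) = 0) :
    span (ZMod 2) (Set.range t) ≤ (B n).orthogonal (span (ZMod 2) (Set.range t)) :=
  fun v hv u hu => span_isotropic h u hu v hv

lemma card_mod (M : Type*) [AddCommGroup M] [Module (ZMod 2) M] [Finite M] :
    Nat.card M = 2 ^ finrank (ZMod 2) M := by
  have : Fintype M := Fintype.ofFinite M
  rw [Nat.card_eq_fintype_card, card_eq_pow_finrank (K := ZMod 2) (V := M), ZMod.card]

lemma card_diff {S O : Submodule (ZMod 2) (V n)} (h : S ≤ O) :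
    Nat.card {v : V n // v ∈ O ∧ v ∉ S} =
      2 ^ finrank (ZMod 2) O - 2 ^ finrank (ZMod 2) S := by
  have e : {v : V n // v ∈ O ∧ v ∉ S} ≃ ((O : Set (V n)) \ (S : Set (V n)) : Set (V n)) :=
    Equiv.subtypeEquivRight (by intro v; simp [Set.mem_diff])
  rw [Nat.card_congr e, Nat.card_coe_set_eq, Set.ncard_diff h]
  rw [← Nat.card_coe_set_eq, ← Nat.card_coe_set_eq]
  rw [show Nat.card ((O : Set (V n))) = Nat.card O from rfl,
    show Nat.card ((S : Set (V n))) = Nat.card S from rfl, card_mod, card_mod]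

lemma card_sigma_fin {ι : Type*} [Fintype ι] (g : ι → Type*) [∀ i, Finite (g i)] :
    Nat.card (Σ i, g i) = ∑ i, Nat.card (g i) := by
  have : ∀ i, Fintype (g i) := fun i => Fintype.ofFinite _
  classical
  simp [Nat.card_eq_fintype_card, Fintype.card_sigma]


def P (k : ℕ) (t : Fin k → V n) : Prop :=
  LinearIndependent (ZMod 2) t ∧ ∀ i j, B n (t i) (t j) = 0

/-- Fiber equivalence for the inductive step. -/
noncomputable def stepEquiv (k : ℕ) (s : {s : Fin k → V n // P k s}) :
    {t : {t : Fin (k + 1) → V n // P (k + 1) t} //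
        (⟨Fin.init t.1, by
          refine ⟨?_, fun i j => ?_⟩
          · have := t.2.1
            rw [← Fin.snoc_init_self t.1] at this
            exact (linearIndependent_fin_snoc.mp this).1
          · exact t.2.2 i.castSucc j.castSucc⟩ :
          {s : Fin k → V n // P k s}) = s} ≃
    {v : V n // v ∈ (B n).orthogonal (span (ZMod 2) (Set.range s.1)) ∧
        v ∉ span (ZMod 2) (Set.range s.1)} where
  toFun t := by
    refine ⟨t.1.1 (Fin.last k), ?_, ?_⟩
    · have hinit : Fin.init t.1.1 = s.1 := congrArg Subtype.val t.2
      rw [← hinit]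
      exact mem_orthogonal_span (fun i => t.1.2.2 i.castSucc (Fin.last k))
    · have hinit : Fin.init t.1.1 = s.1 := congrArg Subtype.val t.2
      have := t.1.2.1
      rw [← Fin.snoc_init_self t.1.1] at this
      have h2 := (linearIndependent_fin_snoc.mp this).2
      rwa [hinit] at h2
  invFun v := by
    refine ⟨⟨Fin.snoc s.1 v.1, ?_, ?_⟩, ?_⟩
    · exact linearIndependent_fin_snoc.mpr ⟨s.2.1, v.2.2⟩
    · intro i j
      refine Fin.lastCases ?_ ?_ i <;> [skip; intro i'] <;>
        refine Fin.lastCases ?_ ?_ j <;> first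
        | (simp only [Fin.snoc_last]; exact B_self n v.1)
        | (intro j'; simp only [Fin.snoc_last, Fin.snoc_castSucc]
           exact B_refl n _ _ (v.2.1 (s.1 j') (subset_span ⟨j', rfl⟩)))
        | (simp only [Fin.snoc_last, Fin.snoc_castSucc]
           exact v.2.1 (s.1 i') (subset_span ⟨i', rfl⟩))
        | (intro j'; simp only [Fin.snoc_castSucc]; exact s.2.2 i' j')
    · apply Subtype.ext
      simp only
      simp
  left_inv := by
    rintro ⟨⟨t, ht⟩, hf⟩
    apply Subtype.ext
    apply Subtype.ext
    have hinit : Fin.init t = s.1 := congrArg Subtype.val hf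
    simp only
    rw [← hinit]
    exact Fin.snoc_init_self t
  right_inv := by
    rintro ⟨v, hv⟩
    apply Subtype.ext
    simp only
    simp

lemma card_P (k : ℕ) (hk : k ≤ n) :
    Nat.card {t : Fin k → V n // P k t} =
      ∏ i ∈ Finset.range k, (2 ^ (2 * n - i) - 2 ^ i) := by
  induction k with
  | zero =>
      have hall : ∀ t : Fin 0 → V n, P 0 t :=
        fun t => ⟨linearIndependent_empty_type, fun i => i.elim0⟩
      rw [Nat.card_congr (Equiv.subtypeUnivEquiv hall)]
      simp [Nat.card_unique]
  | succ k ih =>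
      have hk' : k ≤ n := Nat.le_of_succ_le hk
      have hfin : Finite (Submodule (ZMod 2) (V n)) :=
        Finite.of_injective (fun W => (W : Set (V n))) SetLike.coe_injective
      have : Fintype {s : Fin k → V n // P k s} := Fintype.ofFinite _
      set f : {t : Fin (k + 1) → V n // P (k + 1) t} → {s : Fin k → V n // P k s} :=
        fun t => ⟨Fin.init t.1, by
          refine ⟨?_, fun i j => ?_⟩
          · have := t.2.1
            rw [← Fin.snoc_init_self t.1] at this
            exact (linearIndependent_fin_snoc.mp this).1
          · exact t.2.2 i.castSucc j.castSucc⟩ with hf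
      rw [Nat.card_congr (Equiv.sigmaFiberEquiv f).symm, card_sigma_fin]
      have hfiber : ∀ s : {s : Fin k → V n // P k s},
          Nat.card {t // f t = s} = 2 ^ (2 * n - k) - 2 ^ k := by
        intro s
        rw [Nat.card_congr (stepEquiv k s), card_diff (span_le_orthogonal s.2.2)]
        have hS : finrank (ZMod 2) (span (ZMod 2) (Set.range s.1)) = k := by
          rw [finrank_span_eq_card s.2.1, Fintype.card_fin]
        have hO : finrank (ZMod 2)
            ((B n).orthogonal (span (ZMod 2) (Set.range s.1))) = 2 * n - k := by
          rw [LinearMap.BilinForm.finrank_orthogonal (B_nondeg n), finrank_V n, hS]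
        rw [hS, hO]
      rw [Finset.sum_congr rfl (fun s _ => hfiber s), Finset.sum_const, Finset.card_univ,
        ← Nat.card_eq_fintype_card, ih hk', Finset.prod_range_succ, smul_eq_mul, mul_comm]

-- arithmetic lemmas standalone
lemma term_split {n i : ℕ} (hi : i < n) :
    2 ^ (2 * n - i) - 2 ^ i = (2 ^ (n - i) + 1) * (2 ^ n - 2 ^ i) := by
  obtain ⟨j, rfl⟩ : ∃ j, n = i + j := ⟨n - i, by omega⟩
  rw [show 2 * (i + j) - i = i + 2 * j by omega, show i + j - i = j by omega]
  rw [pow_add, pow_add, two_mul, pow_add]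
  set x := 2 ^ i with hx
  set y := 2 ^ j with hy
  have hy1 : 1 ≤ y := Nat.one_le_two_pow
  have h1 : x ≤ x * y := Nat.le_mul_of_pos_right x (by omega)
  have h2 : x ≤ x * (y * y) := Nat.le_mul_of_pos_right x (by positivity)
  zify [h1, h2]
  ring

lemma prod_reindex (n : ℕ) :
    (∏ i ∈ Finset.range n, (2 ^ (n - i) + 1)) = ∏ k ∈ Finset.Icc 1 n, (2 ^ k + 1) := by
  rw [show Finset.Icc 1 n = Finset.Ico 1 (n + 1) by rfl, Finset.prod_Ico_eq_prod_range]
  simp only [Nat.add_sub_cancel]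
  rw [← Finset.prod_range_reflect (fun i => 2 ^ (1 + i) + 1) n]
  refine Finset.prod_congr rfl fun i hi => ?_
  have : i < n := Finset.mem_range.mp hi
  congr 2
  omega

lemma big_split (n : ℕ) :
    (∏ i ∈ Finset.range n, (2 ^ (2 * n - i) - 2 ^ i)) =
      (∏ k ∈ Finset.Icc 1 n, (2 ^ k + 1)) * ∏ i ∈ Finset.range n, (2 ^ n - 2 ^ i) := by
  rw [← prod_reindex, ← Finset.prod_mul_distrib]
  exact Finset.prod_congr rfl fun i hi => term_split (Finset.mem_range.mp hi)

variable (n)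

/-- The type of Lagrangian subspaces. -/
def Lag :=
  {W : Submodule (ZMod 2) (V n) // finrank (ZMod 2) W = n ∧
    ∀ u ∈ W, ∀ v ∈ W, B n u v = 0}

variable {n}

noncomputable def toLag (t : {t : Fin n → V n // P n t}) : Lag n :=
  ⟨span (ZMod 2) (Set.range t.1),
    by rw [finrank_span_eq_card t.2.1, Fintype.card_fin],
    span_isotropic t.2.2⟩

noncomputable def fiberEquiv (W : Lag n) :
    {t : {t : Fin n → V n // P n t} // toLag t = W} ≃
      {s : Fin n → W.1 // LinearIndependent (ZMod 2) s} where
  toFun t := by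
    refine ⟨fun i => ⟨t.1.1 i, ?_⟩, ?_⟩
    · have h : span (ZMod 2) (Set.range t.1.1) = W.1 := congrArg Subtype.val t.2
      exact h ▸ subset_span ⟨i, rfl⟩
    · exact LinearIndependent.of_comp W.1.subtype t.1.2.1
  invFun s := by
    refine ⟨⟨fun i => (s.1 i : V n), ?_, fun i j => ?_⟩, ?_⟩
    · exact s.2.map' W.1.subtype (ker_subtype W.1)
    · exact W.2.2 _ (s.1 i).2 _ (s.1 j).2
    · apply Subtype.ext
      show span (ZMod 2) (Set.range fun i => ((s.1 i : V n))) = W.1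
      have hrange : (Set.range fun i => ((s.1 i : V n))) =
          W.1.subtype '' (Set.range s.1) := by
        rw [← Set.range_comp]; rfl
      rw [hrange, span_image, s.2.span_eq_top_of_card_eq_finrank'
        (by rw [Fintype.card_fin, W.2.1]), Submodule.map_top, range_subtype]
  left_inv := by
    rintro ⟨⟨t, ht⟩, hf⟩
    apply Subtype.ext; apply Subtype.ext
    rfl
  right_inv := by
    rintro ⟨s, hs⟩
    apply Subtype.ext
    funext i
    apply Subtype.ext
    rfl

lemma card_Lag_mul (n : ℕ) :
    Nat.card (Lag n) * ∏ i ∈ Finset.range n, (2 ^ n - 2 ^ i) =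
      ∏ i ∈ Finset.range n, (2 ^ (2 * n - i) - 2 ^ i) := by
  classical
  have hfin : Finite (Submodule (ZMod 2) (V n)) :=
    Finite.of_injective (fun W => (W : Set (V n))) SetLike.coe_injective
  have hfinL : Finite (Lag n) := by
    unfold Lag; infer_instance
  have : Fintype (Lag n) := Fintype.ofFinite _
  rw [← card_P n le_rfl, Nat.card_congr (Equiv.sigmaFiberEquiv toLag).symm, card_sigma_fin]
  have hfiber : ∀ W : Lag n,
      Nat.card {t // toLag t = W} = ∏ i ∈ Finset.range n, (2 ^ n - 2 ^ i) := by
    intro W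
    rw [Nat.card_congr (fiberEquiv W)]
    have := card_linearIndependent (K := ZMod 2) (V := W.1) (k := n)
      (by rw [W.2.1])
    rw [this, ZMod.card, W.2.1, ← Fin.prod_univ_eq_prod_range]
  rw [Finset.sum_congr rfl (fun W _ => hfiber W), Finset.sum_const, Finset.card_univ,
    ← Nat.card_eq_fintype_card, smul_eq_mul]

end Stab

/-- The number of Lagrangian subspaces of the standard symplectic space
`(ZMod 2)^n × (ZMod 2)^n`: for `n ≥ 1`, the number of `n`-dimensional subspaces
on which the symplectic form `ω((a,b),(c,d)) = a·d + b·c` vanishes identically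
is `Π_{k=1}^{n} (2^k + 1)`. -/
theorem stmt_10 (n : ℕ) (hn : 1 ≤ n) :
    Nat.card {W : Submodule (ZMod 2) ((Fin n → ZMod 2) × (Fin n → ZMod 2)) //
      Module.finrank (ZMod 2) W = n ∧
      ∀ u ∈ W, ∀ v ∈ W,
        (∑ i, u.1 i * v.2 i) + (∑ i, u.2 i * v.1 i) = (0 : ZMod 2)} =
    ∏ k ∈ Finset.Icc 1 n, (2 ^ k + 1) := by
  have e : {W : Submodule (ZMod 2) ((Fin n → ZMod 2) × (Fin n → ZMod 2)) //
      Module.finrank (ZMod 2) W = n ∧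
      ∀ u ∈ W, ∀ v ∈ W,
        (∑ i, u.1 i * v.2 i) + (∑ i, u.2 i * v.1 i) = (0 : ZMod 2)} ≃ Stab.Lag n :=
    Equiv.subtypeEquivRight (by intro W; simp [Stab.Lag, Stab.B_apply])
  rw [Nat.card_congr e]
  have key := Stab.card_Lag_mul n
  rw [Stab.big_split n] at key
  have hpos : 0 < ∏ i ∈ Finset.range n, (2 ^ n - 2 ^ i) := by
    apply Finset.prod_pos
    intro i hi
    have : i < n := Finset.mem_range.mp hi
    have h2 : (2:ℕ) ^ i < 2 ^ n := Nat.pow_lt_pow_right one_lt_two this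
    omega
  exact Nat.eq_of_mul_eq_mul_right hpos key
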